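/- For every n ≥ 2 there exists an n × n 0-1 matrix M with st(M) ≤ n − 1; i.e., st(n) ≤ n − 1 for n ≥ 2. -/

import Mathlib

/-- A step of a staircase: the next position is strictly to the right in the
same row, or strictly below in the same column. -/
def Step {n N : ℕ} (p q : Fin n × Fin N) : Prop :=
  (p.1 = q.1 ∧ p.2 < q.2) ∨ (p.2 = q.2 ∧ p.1 < q.1)

/-- A `v`-staircase in the 0-1 matrix `M`: a sequence of positions all holding
the value `v`, each successive one strictly to the right in the same row or
strictly below in the same column of the previous one. -/
def IsStaircase {n N : ℕ} (M : Fin n → Fin N → Fin 2) (v : Fin 2)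
    (L : List (Fin n × Fin N)) : Prop :=
  (∀ p ∈ L, M p.1 p.2 = v) ∧ L.Chain' Step

/-- Along a step, the coordinate sum strictly increases. -/
lemma step_sum_lt {n N : ℕ} {p q : Fin n × Fin N} (h : Step p q) :
    p.1.val + p.2.val < q.1.val + q.2.val := by
  rcases h with ⟨h1, h2⟩ | ⟨h1, h2⟩
  · have h1' : p.1.val = q.1.val := congrArg Fin.val h1
    have h2' : p.2.val < q.2.val := h2
    omega
  · have h1' : p.2.val = q.2.val := congrArg Fin.val h1
    have h2' : p.1.val < q.1.val := h2
    omega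

/-- A staircase whose coordinate sums lie in `[lo, hi]` has length `≤ hi + 1 - lo`. -/
lemma sum_len {n N lo hi : ℕ} (L : List (Fin n × Fin N))
    (hch : L.Chain' Step)
    (hm : ∀ p ∈ L, lo ≤ p.1.val + p.2.val ∧ p.1.val + p.2.val ≤ hi) :
    L.length ≤ hi + 1 - lo := by
  set l := L.map (fun p => p.1.val + p.2.val) with hl
  have hc : l.Chain' (· < ·) :=
    List.isChain_map_of_isChain _ (fun p q hpq => step_sum_lt hpq) hch
  have hp : l.Pairwise (· < ·) := List.isChain_iff_pairwise.mp hc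
  have hnd : l.Nodup := hp.imp (fun h => ne_of_lt h)
  have hsub : l.toFinset ⊆ Finset.Icc lo hi := by
    intro x hx
    rw [List.mem_toFinset] at hx
    rw [hl, List.mem_map] at hx
    obtain ⟨p, hpL, rfl⟩ := hx
    have := hm p hpL
    rw [Finset.mem_Icc]
    omega
  calc L.length = l.length := (List.length_map _).symm
    _ = l.toFinset.card := (List.toFinset_card_of_nodup hnd).symm
    _ ≤ (Finset.Icc lo hi).card := Finset.card_le_card hsub
    _ = hi + 1 - lo := by rw [Nat.card_Icc]

/-- A staircase all of whose positions lie in triangle ∪ square stays entirely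
in the triangle or entirely in the square. -/
lemma region {n N a : ℕ} : ∀ (L : List (Fin n × Fin N)), L.Chain' Step →
    (∀ p ∈ L, p.1.val + p.2.val ≤ a ∨ (a < p.1.val ∧ a < p.2.val)) →
    (∀ p ∈ L, p.1.val + p.2.val ≤ a) ∨ (∀ p ∈ L, a < p.1.val ∧ a < p.2.val)
  | [], _, _ => Or.inl (by simp)
  | p :: L, hch, hv => by
    have ih := region L hch.tail (fun q hq => hv q (List.mem_cons_of_mem _ hq))
    have hstep : ∀ r L', L = r :: L' → Step p r := by
      intro r L' hE
      subst hE
      exact (List.isChain_cons_cons.mp hch).1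
    rcases hv p (List.mem_cons_self) with hp | hp
    · left
      intro q hq
      rcases List.mem_cons.mp hq with rfl | hq
      · exact hp
      · rcases ih with h | h
        · exact h q hq
        · exfalso
          match L, hq with
          | r :: L', hq =>
            have hs := hstep r L' rfl
            have hr := h r (List.mem_cons_self)
            rcases hs with ⟨h1, h2⟩ | ⟨h1, h2⟩
            · have h1' : p.1.val = r.1.val := congrArg Fin.val h1
              omega
            · have h1' : p.2.val = r.2.val := congrArg Fin.val h1
              omega
    · right
      intro q hq
      rcases List.mem_cons.mp hq with rfl | hq
      · exact hp
      · rcases ih with h | h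
        · exfalso
          match L, hq with
          | r :: L', hq =>
            have hs := hstep r L' rfl
            have hr := h r (List.mem_cons_self)
            rcases hs with ⟨h1, h2⟩ | ⟨h1, h2⟩
            · have h1' : p.1.val = r.1.val := congrArg Fin.val h1
              omega
            · have h1' : p.2.val = r.2.val := congrArg Fin.val h1
              omega
        · exact h q hq

/-- For every n ≥ 2 there is an n × n 0-1 matrix in which every homogeneous
staircase has length at most n − 1; i.e. st(n) ≤ n − 1. -/
theorem stmt12 (n : ℕ) (hn : 2 ≤ n) :
    ∃ M : Fin n → Fin n → Fin 2,
      ∀ (v : Fin 2) (L : List (Fin n × Fin n)),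
        IsStaircase M v L → L.length ≤ n - 1 := by
  set a := (n - 1) / 2 with ha
  refine ⟨fun i j => if i.val + j.val ≤ a ∨ (a < i.val ∧ a < j.val) then 1 else 0,
    fun v L hL => ?_⟩
  obtain ⟨hval, hch⟩ := hL
  fin_cases v
  · -- value 0: band a+1 ≤ sum ≤ a + (n-1)
    have hm : ∀ p ∈ L, a + 1 ≤ p.1.val + p.2.val ∧ p.1.val + p.2.val ≤ a + (n - 1) := by
      intro p hp
      have h := hval p hp
      by_cases hc : p.1.val + p.2.val ≤ a ∨ (a < p.1.val ∧ a < p.2.val)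
      · simp only [if_pos hc] at h
        exact absurd h (by decide)
      · push_neg at hc
        have h1 := p.1.isLt
        have h2 := p.2.isLt
        omega
    have := sum_len L hch hm
    omega
  · -- value 1: triangle or square
    have hm : ∀ p ∈ L, p.1.val + p.2.val ≤ a ∨ (a < p.1.val ∧ a < p.2.val) := by
      intro p hp
      have h := hval p hp
      by_cases hc : p.1.val + p.2.val ≤ a ∨ (a < p.1.val ∧ a < p.2.val)
      · exact hc
      · simp only [if_neg hc] at h
        exact absurd h (by decide)
    rcases region L hch hm with h | h
    · have hm' : ∀ p ∈ L, 0 ≤ p.1.val + p.2.val ∧ p.1.val + p.2.val ≤ a :=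
        fun p hp => ⟨Nat.zero_le _, h p hp⟩
      have := sum_len L hch hm'
      omega
    · have hm' : ∀ p ∈ L, 2 * a + 2 ≤ p.1.val + p.2.val ∧
          p.1.val + p.2.val ≤ 2 * n - 2 := by
        intro p hp
        have := h p hp
        have h1 := p.1.isLt
        have h2 := p.2.isLt
        omega
      have := sum_len L hch hm'
      omega
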